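/- arXiv:2312.12179 — 2 statements merged into one kernel-verified Lean document; each statement's English description precedes it below -/
import Mathlib

section
/- For every c > 0, there exists a constant δ > 0 such that there is exactly one function h on [1-δ, 1) satisfying the ordinary differential equation h'(x) = (h(x))² + 2c/(1-x) together with the conditions 0 < h(x) < 1/(1-x) for all x ∈ [1-δ, 1) and lim_{x→1⁻} ∫_{1-δ}^{x} h(y) dy = ∞. -/
open Filter Topology
set_option maxHeartbeats 1000000

noncomputable section
namespace L9

def Av (c : ℝ) (n : ℕ) : ℝ := (-(2*c))^n / (n.factorial * (n+1).factorial)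
def Bv (c : ℝ) (n : ℕ) : ℝ := (-(2*c))^n / ((n.factorial : ℝ) * n.factorial)
def vv (c t : ℝ) : ℝ := ∑' n, Av c n * t^(n+1)
def ww (c t : ℝ) : ℝ := ∑' n, Bv c n * t^n
def zz (c t : ℝ) : ℝ := ∑' n, (Bv c (n+1) * (n+1)) * t^n
def Ev (c : ℝ) : ℝ := ∑' n, (2*c)^n / n.factorial

variable {c : ℝ}

lemma abs_Av (hc : 0 ≤ c) (n : ℕ) : |Av c n| ≤ (2*c)^n / n.factorial := by
  rw [Av, abs_div, abs_pow, abs_neg, abs_of_nonneg (by linarith : (0:ℝ) ≤ 2*c)]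
  apply div_le_div_of_nonneg_left ?_ ?_ ?_ |>.trans_eq rfl
  · positivity
  · positivity
  · rw [abs_of_nonneg (by positivity)]
    have h1 : (1:ℝ) ≤ ((n+1).factorial : ℝ) := by
      exact_mod_cast Nat.one_le_iff_ne_zero.2 (Nat.factorial_ne_zero _)
    have h0 : (0:ℝ) < n.factorial := by exact_mod_cast n.factorial_pos
    nlinarith

lemma abs_Bv (hc : 0 ≤ c) (n : ℕ) : |Bv c n| ≤ (2*c)^n / n.factorial := by
  rw [Bv, abs_div, abs_pow, abs_neg, abs_of_nonneg (by linarith : (0:ℝ) ≤ 2*c)]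
  apply div_le_div_of_nonneg_left ?_ ?_ ?_ |>.trans_eq rfl
  · positivity
  · positivity
  · rw [abs_of_nonneg (by positivity)]
    have h1 : (1:ℝ) ≤ (n.factorial : ℝ) := by
      exact_mod_cast Nat.one_le_iff_ne_zero.2 (Nat.factorial_ne_zero _)
    have h0 : (0:ℝ) < n.factorial := by exact_mod_cast n.factorial_pos
    nlinarith

lemma nsucc_le_two_pow (n : ℕ) : ((n:ℝ) + 1) ≤ 2^n := by
  induction n with
  | zero => norm_num
  | succ k ih => push_cast; rw [pow_succ]; push_cast at ih; nlinarith [pow_pos (by norm_num : (0:ℝ)<2) k]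

lemma bound_v' (hc : 0 ≤ c) {y : ℝ} (hy : |y| ≤ 2) (n : ℕ) :
    ‖Av c n * (((n:ℝ)+1) * y^n)‖ ≤ (8*c)^n / n.factorial := by
  have h1 : |Av c n * (((n:ℝ)+1) * y^n)| = |Av c n| * (((n:ℝ)+1) * |y|^n) := by
    rw [abs_mul, abs_mul, abs_pow, abs_of_nonneg (by positivity : (0:ℝ) ≤ (n:ℝ)+1)]
  rw [Real.norm_eq_abs, h1]
  have h2 : ((n:ℝ)+1) * |y|^n ≤ 2^n * 2^n := by
    have := nsucc_le_two_pow n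
    have : |y|^n ≤ 2^n := pow_le_pow_left₀ (abs_nonneg y) hy n
    nlinarith [nsucc_le_two_pow n, pow_nonneg (abs_nonneg y) n, pow_pos (by norm_num : (0:ℝ)<2) n]
  calc |Av c n| * (((n:ℝ)+1) * |y|^n) ≤ ((2*c)^n / n.factorial) * (2^n * 2^n) := by
        apply mul_le_mul (abs_Av hc n) h2 (by positivity) (by positivity)
    _ = (8*c)^n / n.factorial := by
        have h4 : (8*c:ℝ)^n = 2^n*2^n*(2*c)^n := by rw [← mul_pow, ← mul_pow]; ring_nf
        rw [h4]; ring
lemma bound_w' (hc : 0 ≤ c) {y : ℝ} (hy : |y| ≤ 2) (n : ℕ) :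
    ‖Bv c n * ((n:ℝ) * y^(n-1))‖ ≤ (8*c)^n / n.factorial := by
  have h1 : |Bv c n * ((n:ℝ) * y^(n-1))| = |Bv c n| * ((n:ℝ) * |y|^(n-1)) := by
    rw [abs_mul, abs_mul, abs_pow, abs_of_nonneg (by positivity : (0:ℝ) ≤ (n:ℝ))]
  rw [Real.norm_eq_abs, h1]
  have h2 : (n:ℝ) * |y|^(n-1) ≤ 2^n * 2^n := by
    have ha : (n:ℝ) ≤ 2^n := le_trans (by linarith) (nsucc_le_two_pow n)
    have hb : |y|^(n-1) ≤ 2^(n-1) := pow_le_pow_left₀ (abs_nonneg y) hy _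
    have hb2 : (2:ℝ)^(n-1) ≤ 2^n := pow_le_pow_right₀ (by norm_num) (Nat.sub_le n 1)
    nlinarith [pow_nonneg (abs_nonneg y) (n-1), pow_pos (by norm_num : (0:ℝ)<2) n]
  calc |Bv c n| * ((n:ℝ) * |y|^(n-1)) ≤ ((2*c)^n / n.factorial) * (2^n * 2^n) := by
        apply mul_le_mul (abs_Bv hc n) h2 (by positivity) (by positivity)
    _ = (8*c)^n / n.factorial := by
        have h4 : (8*c:ℝ)^n = 2^n*2^n*(2*c)^n := by rw [← mul_pow, ← mul_pow]; ring_nf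
        rw [h4]; ring

lemma summable_vv (hc : 0 ≤ c) {t : ℝ} (ht : |t| ≤ 2) : Summable (fun n => Av c n * t^(n+1)) := by
  refine Summable.of_norm_bounded (E := ℝ) ((Real.summable_pow_div_factorial (4*c)).mul_left 2) ?_
  intro n
  rw [Real.norm_eq_abs, abs_mul, abs_pow]
  calc |Av c n| * |t|^(n+1) ≤ ((2*c)^n / n.factorial) * (2^(n+1)) :=
        mul_le_mul (abs_Av hc n) (pow_le_pow_left₀ (abs_nonneg t) ht _) (by positivity) (by positivity)
    _ = 2 * ((4*c)^n / n.factorial) := by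
        have h4 : (4*c:ℝ)^n = 2^n*(2*c)^n := by rw [← mul_pow]; ring_nf
        rw [pow_succ, h4]; ring

lemma summable_ww (hc : 0 ≤ c) {t : ℝ} (ht : |t| ≤ 2) : Summable (fun n => Bv c n * t^n) := by
  refine Summable.of_norm_bounded (E := ℝ) (Real.summable_pow_div_factorial (4*c)) ?_
  intro n
  rw [Real.norm_eq_abs, abs_mul, abs_pow]
  calc |Bv c n| * |t|^n ≤ ((2*c)^n / n.factorial) * (2^n) :=
        mul_le_mul (abs_Bv hc n) (pow_le_pow_left₀ (abs_nonneg t) ht _) (by positivity) (by positivity)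
    _ = (4*c)^n / n.factorial := by
        have h4 : (4*c:ℝ)^n = 2^n*(2*c)^n := by rw [← mul_pow]; ring_nf
        rw [h4]; ring

lemma Av_mul : ∀ n : ℕ, Av c n * ((n:ℝ)+1) = Bv c n := by
  intro n
  rw [Av, Bv, Nat.factorial_succ]
  have h0 : (0:ℝ) < n.factorial := by exact_mod_cast n.factorial_pos
  field_simp
  push_cast; ring

lemma Bv_succ : ∀ n : ℕ, Bv c (n+1) * ((n:ℝ)+1) = -(2*c) * Av c n := by
  intro n
  rw [Av, Bv, Nat.factorial_succ, pow_succ]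
  have h0 : (0:ℝ) < n.factorial := by exact_mod_cast n.factorial_pos
  field_simp
  push_cast; ring

lemma hasDerivAt_vv (hc : 0 ≤ c) {t : ℝ} (ht : t ∈ Set.Ioo (-2:ℝ) 2) :
    HasDerivAt (vv c) (ww c t) t := by
  have habs : ∀ y ∈ Set.Ioo (-2:ℝ) 2, |y| ≤ 2 := by
    intro y hy; rw [abs_le]; exact ⟨hy.1.le, hy.2.le⟩
  have H := hasDerivAt_tsum_of_isPreconnected (F := ℝ) (𝕜 := ℝ)
    (u := fun n => (8*c)^n / n.factorial)
    (g := fun n y => Av c n * y^(n+1)) (g' := fun n y => Av c n * (((n:ℝ)+1) * y^n))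
    (Real.summable_pow_div_factorial (8*c)) isOpen_Ioo
    (convex_Ioo (-2:ℝ) 2).isPreconnected
    (fun n y _ => by
      simpa using (hasDerivAt_pow (n+1) y).const_mul (Av c n))
    (fun n y hy => bound_v' hc (habs y hy) n)
    (y₀ := 0) (by norm_num)
    (summable_zero.congr (fun n => by simp))
    ht
  have : (∑' n, Av c n * (((n:ℝ)+1) * t^n)) = ww c t := by
    rw [ww]; apply tsum_congr; intro n; rw [← Av_mul]; ring
  rw [← this]; exact H

lemma hasDerivAt_ww (hc : 0 ≤ c) {t : ℝ} (ht : t ∈ Set.Ioo (-2:ℝ) 2) :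
    HasDerivAt (ww c) (zz c t) t := by
  have habs : ∀ y ∈ Set.Ioo (-2:ℝ) 2, |y| ≤ 2 := by
    intro y hy; rw [abs_le]; exact ⟨hy.1.le, hy.2.le⟩
  have H := hasDerivAt_tsum_of_isPreconnected (F := ℝ) (𝕜 := ℝ)
    (u := fun n => (8*c)^n / n.factorial)
    (g := fun n y => Bv c n * y^n) (g' := fun n y => Bv c n * ((n:ℝ) * y^(n-1)))
    (Real.summable_pow_div_factorial (8*c)) isOpen_Ioo
    (convex_Ioo (-2:ℝ) 2).isPreconnected
    (fun n y _ => (hasDerivAt_pow n y).const_mul (Bv c n))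
    (fun n y hy => bound_w' hc (habs y hy) n)
    (y₀ := 0) (by norm_num)
    (summable_of_ne_finset_zero (s := {0}) (fun n hn => by
      have : n ≠ 0 := by simpa using hn
      simp [zero_pow this]))
    ht
  have hsum : Summable (fun n => Bv c n * ((n:ℝ) * t^(n-1))) :=
    Summable.of_norm_bounded (E := ℝ) (Real.summable_pow_div_factorial (8*c))
      (fun n => bound_w' hc (habs t ht) n)
  have : (∑' n, Bv c n * ((n:ℝ) * t^(n-1))) = zz c t := by
    rw [hsum.tsum_eq_zero_add, zz]
    simp only [Nat.cast_zero, zero_mul, mul_zero, zero_add, Nat.cast_succ, Nat.add_sub_cancel]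
    apply tsum_congr; intro n; push_cast; ring
  rw [← this]; exact H

lemma sumE : Summable (fun n : ℕ => (2*c)^n / n.factorial) :=
  Real.summable_pow_div_factorial (2*c)

lemma vv_zero : vv c 0 = 0 := by
  rw [vv]; convert tsum_zero with n; simp

lemma t_mul_zz (t : ℝ) : t * zz c t = -(2*c) * vv c t := by
  rw [zz, vv, ← tsum_mul_left, ← tsum_mul_left]
  apply tsum_congr; intro n
  linear_combination t^(n+1) * Bv_succ (c := c) n

lemma sumE_shift : Summable (fun n : ℕ => (2*c)^(n+1) / (n+1).factorial) :=
  sumE.comp_injective (add_left_injective 1)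

lemma Ev_ge_one (hc : 0 ≤ c) : 1 ≤ Ev c := by
  have h := Summable.tsum_eq_zero_add (sumE (c := c))
  have h2 : (0:ℝ) ≤ ∑' n : ℕ, (2*c)^(n+1) / (n+1).factorial :=
    tsum_nonneg (fun n => by positivity)
  rw [Ev, h]; simp only [pow_zero, Nat.factorial_zero, Nat.cast_one]; linarith

lemma shift_le_Ev (hc : 0 ≤ c) : (∑' n : ℕ, (2*c)^(n+1) / (n+1).factorial) ≤ Ev c := by
  have h := Summable.tsum_eq_zero_add (sumE (c := c))
  rw [Ev, h]; simp only [pow_zero, Nat.factorial_zero, Nat.cast_one]; linarith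

lemma bound_vv (hc : 0 ≤ c) {t : ℝ} (ht : t ∈ Set.Icc (0:ℝ) 1) :
    |vv c t - t| ≤ Ev c * t^2 := by
  have ht2 : |t| ≤ 2 := by rw [abs_le]; constructor <;> [linarith [ht.1]; linarith [ht.2]]
  have hs0 := summable_vv hc ht2
  have hs : Summable (fun n => Av c (n+1) * t^(n+2)) :=
    hs0.comp_injective (add_left_injective 1)
  have hA0 : Av c 0 = 1 := by simp [Av]
  have hvv : vv c t - t = ∑' n, Av c (n+1) * t^(n+2) := by
    rw [vv, hs0.tsum_eq_zero_add, hA0]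
    simp only [show ∀ b:ℕ, b+1+1=b+2 from fun b => rfl]; ring
  have hterm : ∀ n : ℕ, |Av c (n+1) * t^(n+2)| ≤ (2*c)^(n+1) / (n+1).factorial * t^2 := by
    intro n
    rw [abs_mul, abs_pow]
    apply mul_le_mul (abs_Av hc (n+1)) ?_ (pow_nonneg (abs_nonneg t) _) (by positivity)
    rw [abs_of_nonneg ht.1]
    exact pow_le_pow_of_le_one ht.1 ht.2 (by omega)
  rw [hvv]
  calc |∑' n, Av c (n+1) * t^(n+2)| ≤ ∑' n, |Av c (n+1) * t^(n+2)| := by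
        simpa only [Real.norm_eq_abs] using norm_tsum_le_tsum_norm (f := fun n => Av c (n+1) * t^(n+2)) (by simpa only [Real.norm_eq_abs] using hs.abs)
    _ ≤ ∑' n : ℕ, (2*c)^(n+1) / (n+1).factorial * t^2 :=
        Summable.tsum_le_tsum hterm hs.abs (sumE_shift.mul_right _)
    _ = (∑' n : ℕ, (2*c)^(n+1) / (n+1).factorial) * t^2 := tsum_mul_right
    _ ≤ Ev c * t^2 := by nlinarith [shift_le_Ev hc, sq_nonneg t]

lemma bound_ww (hc : 0 ≤ c) {t : ℝ} (ht : t ∈ Set.Icc (0:ℝ) 1) :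
    |ww c t - 1| ≤ Ev c * t := by
  have ht2 : |t| ≤ 2 := by rw [abs_le]; constructor <;> [linarith [ht.1]; linarith [ht.2]]
  have hs0 := summable_ww hc ht2
  have hs : Summable (fun n => Bv c (n+1) * t^(n+1)) :=
    hs0.comp_injective (add_left_injective 1)
  have hB0 : Bv c 0 = 1 := by simp [Bv]
  have hvv : ww c t - 1 = ∑' n, Bv c (n+1) * t^(n+1) := by
    rw [ww, hs0.tsum_eq_zero_add, hB0]; ring
  have hterm : ∀ n : ℕ, |Bv c (n+1) * t^(n+1)| ≤ (2*c)^(n+1) / (n+1).factorial * t := by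
    intro n
    rw [abs_mul, abs_pow]
    apply mul_le_mul (abs_Bv hc (n+1)) ?_ (pow_nonneg (abs_nonneg t) _) (by positivity)
    rw [abs_of_nonneg ht.1]
    calc t^(n+1) ≤ t^1 := pow_le_pow_of_le_one ht.1 ht.2 (by omega)
      _ = t := pow_one t
  rw [hvv]
  calc |∑' n, Bv c (n+1) * t^(n+1)| ≤ ∑' n, |Bv c (n+1) * t^(n+1)| := by
        simpa only [Real.norm_eq_abs] using norm_tsum_le_tsum_norm (f := fun n => Bv c (n+1) * t^(n+1)) (by simpa only [Real.norm_eq_abs] using hs.abs)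
    _ ≤ ∑' n : ℕ, (2*c)^(n+1) / (n+1).factorial * t :=
        Summable.tsum_le_tsum hterm hs.abs (sumE_shift.mul_right _)
    _ = (∑' n : ℕ, (2*c)^(n+1) / (n+1).factorial) * t := tsum_mul_right
    _ ≤ Ev c * t := by nlinarith [shift_le_Ev hc, ht.1]

def dl (c : ℝ) : ℝ := min 1 (1/(2 * Ev c))

lemma dl_pos (hc : 0 < c) : 0 < dl c := by
  have := Ev_ge_one hc.le
  apply lt_min one_pos; positivity

lemma dl_le_one : dl c ≤ 1 := min_le_left _ _

lemma window (hc : 0 < c) {t : ℝ} (ht : t ∈ Set.Ioc 0 (dl c)) :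
    1/2 ≤ ww c t ∧ ww c t ≤ 3/2 ∧ t/2 ≤ vv c t ∧ vv c t ≤ 3*t/2 := by
  have hE := Ev_ge_one hc.le
  have ht1 : t ≤ 1 := le_trans ht.2 dl_le_one
  have htt : t ∈ Set.Icc (0:ℝ) 1 := ⟨ht.1.le, ht1⟩
  have hEt : Ev c * t ≤ 1/2 := by
    have h2 : t ≤ 1/(2 * Ev c) := le_trans ht.2 (min_le_right _ _)
    rw [le_div_iff₀ (by positivity)] at h2
    nlinarith
  have h1 := abs_le.1 (bound_ww hc.le htt)
  have h2 := abs_le.1 (bound_vv hc.le htt)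
  have hq : Ev c * t^2 ≤ t/2 := by nlinarith [ht.1]
  refine ⟨by linarith [h1.1], by linarith [h1.2], by linarith [h2.1], by linarith [h2.2]⟩

lemma vv_pos (hc : 0 < c) {t : ℝ} (ht : t ∈ Set.Ioc 0 (dl c)) : 0 < vv c t := by
  have := (window hc ht).2.2.1; linarith [ht.1]

def gg (c : ℝ) : ℝ → ℝ := fun t => vv c t - t * ww c t

lemma Ioc_sub_Ioo {t : ℝ} (ht : t ∈ Set.Ioc 0 (dl c)) : t ∈ Set.Ioo (-2:ℝ) 2 :=
  ⟨by linarith [ht.1], by linarith [ht.2, dl_le_one (c := c)]⟩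

lemma hasDerivAt_gg (hc : 0 ≤ c) {s : ℝ} (hs : s ∈ Set.Ioo (-2:ℝ) 2) :
    HasDerivAt (gg c) (2*c*vv c s) s := by
  have h := (hasDerivAt_vv hc hs).sub ((hasDerivAt_id s).mul (hasDerivAt_ww hc hs))
  refine h.congr_deriv ?_; symm
  simp only [id_eq]
  linear_combination t_mul_zz (c := c) s

lemma gg_pos (hc : 0 < c) {t : ℝ} (ht : t ∈ Set.Ioc 0 (dl c)) : 0 < gg c t := by
  have hsub : Set.Icc (0:ℝ) (dl c) ⊆ Set.Ioo (-2:ℝ) 2 := fun y hy =>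
    ⟨by linarith [hy.1], by linarith [hy.2, dl_le_one (c := c)]⟩
  have hmono : StrictMonoOn (gg c) (Set.Icc 0 (dl c)) := by
    apply strictMonoOn_of_deriv_pos (convex_Icc _ _)
    · exact fun y hy => (hasDerivAt_gg hc.le (hsub hy)).continuousAt.continuousWithinAt
    · intro y hy
      rw [interior_Icc] at hy
      rw [(hasDerivAt_gg hc.le (hsub ⟨hy.1.le, hy.2.le⟩)).deriv]
      have := vv_pos hc ⟨hy.1, hy.2.le⟩
      positivity
  have h0 : gg c 0 = 0 := by simp [gg, vv_zero]
  have := hmono (Set.left_mem_Icc.2 (dl_pos hc).le) ⟨ht.1.le, ht.2⟩ ht.1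
  rwa [h0] at this

def hh (c : ℝ) : ℝ → ℝ := fun x => ww c (1-x) / vv c (1-x)

lemma mem_window {x : ℝ} (hc : 0 < c) (hx : x ∈ Set.Ico (1 - dl c) 1) :
    (1-x) ∈ Set.Ioc 0 (dl c) := ⟨by linarith [hx.2], by linarith [hx.1]⟩

lemma hasDerivAt_comp_vv (hc : 0 ≤ c) {x : ℝ} (h2 : 1-x ∈ Set.Ioo (-2:ℝ) 2) :
    HasDerivAt (fun y => vv c (1-y)) (-(ww c (1-x))) x := by
  have h := (hasDerivAt_vv hc h2).comp x ((hasDerivAt_const x 1).sub (hasDerivAt_id x))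
  refine h.congr_deriv ?_; ring

lemma hasDerivAt_comp_ww (hc : 0 ≤ c) {x : ℝ} (h2 : 1-x ∈ Set.Ioo (-2:ℝ) 2) :
    HasDerivAt (fun y => ww c (1-y)) (-(zz c (1-x))) x := by
  have h := (hasDerivAt_ww hc h2).comp x ((hasDerivAt_const x 1).sub (hasDerivAt_id x))
  refine h.congr_deriv ?_; ring

lemma hasDerivAt_hh (hc : 0 < c) {x : ℝ} (hx : x ∈ Set.Ico (1 - dl c) 1) :
    HasDerivAt (hh c) ((hh c x)^2 + 2*c/(1-x)) x := by
  have htI : (1-x) ∈ Set.Ioc 0 (dl c) := mem_window hc hx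
  have ht2 : (1-x) ∈ Set.Ioo (-2:ℝ) 2 := Ioc_sub_Ioo htI
  have hv := vv_pos hc htI
  have ht0 : (0:ℝ) < 1 - x := htI.1
  have H := (hasDerivAt_comp_ww hc.le ht2).div (hasDerivAt_comp_vv hc.le ht2) hv.ne'
  have hzz : zz c (1-x) = -(2*c) * vv c (1-x) / (1-x) := by
    rw [eq_div_iff ht0.ne', mul_comm (zz c (1-x))]
    exact t_mul_zz (c := c) (1-x)
  refine H.congr_deriv ?_; symm
  rw [hh, hzz]
  field_simp
  ring

lemma continuousOn_hh (hc : 0 < c) : ContinuousOn (hh c) (Set.Ico (1 - dl c) 1) := by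
  intro y hy
  have htI := mem_window hc hy
  have ht2 := Ioc_sub_Ioo htI
  exact (((hasDerivAt_comp_ww hc.le ht2).continuousAt.continuousWithinAt).div
    ((hasDerivAt_comp_vv hc.le ht2).continuousAt.continuousWithinAt) (vv_pos hc htI).ne')

lemma integral_hh (hc : 0 < c) {x : ℝ} (hx : x ∈ Set.Ico (1 - dl c) 1) :
    ∫ y in (1 - dl c)..x, hh c y = Real.log (vv c (dl c)) - Real.log (vv c (1-x)) := by
  have key := intervalIntegral.integral_eq_sub_of_hasDerivAt
    (f := fun y => -Real.log (vv c (1-y))) (f' := hh c) (a := 1 - dl c) (b := x) ?_ ?_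
  · rw [key]
    have : 1 - (1 - dl c) = dl c := by ring
    rw [this]; ring
  · intro y hy
    rw [Set.uIcc_of_le hx.1] at hy
    have hyI : y ∈ Set.Ico (1 - dl c) 1 := ⟨hy.1, lt_of_le_of_lt hy.2 hx.2⟩
    have htI := mem_window hc hyI
    have ht2 := Ioc_sub_Ioo htI
    have hv := vv_pos hc htI
    have H := ((Real.hasDerivAt_log hv.ne').comp y (hasDerivAt_comp_vv hc.le ht2)).neg
    refine H.congr_deriv ?_; symm
    rw [hh]; field_simp
  · apply ContinuousOn.intervalIntegrable
    rw [Set.uIcc_of_le hx.1]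
    exact (continuousOn_hh hc).mono (fun y hy => ⟨hy.1, lt_of_le_of_lt hy.2 hx.2⟩)

lemma tendsto_vv_comp (hc : 0 < c) :
    Tendsto (fun x => vv c (1-x)) (𝓝[<](1:ℝ)) (𝓝[>](0:ℝ)) := by
  rw [tendsto_nhdsWithin_iff]
  constructor
  · have h0 : Tendsto (fun x : ℝ => 1 - x) (𝓝 (1:ℝ)) (𝓝 (0:ℝ)) := by
      have hcont : Continuous (fun x : ℝ => 1 - x) := continuous_const.sub continuous_id
      simpa using hcont.tendsto (1:ℝ)
    have h1 : Tendsto (fun x : ℝ => 1 - x) (𝓝[<](1:ℝ)) (𝓝 (0:ℝ)) :=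
      h0.mono_left nhdsWithin_le_nhds
    have h2 : ContinuousAt (vv c) 0 :=
      (hasDerivAt_vv hc.le (by norm_num : (0:ℝ) ∈ Set.Ioo (-2:ℝ) 2)).continuousAt
    have := (h2.tendsto.comp h1)
    rwa [vv_zero] at this
  · filter_upwards [Ioo_mem_nhdsLT (by linarith [dl_pos hc] : 1 - dl c < 1)] with x hx
    exact vv_pos hc ⟨by linarith [hx.2], by linarith [hx.1]⟩

lemma tendsto_int_hh (hc : 0 < c) :
    Tendsto (fun x => ∫ y in (1 - dl c)..x, hh c y) (𝓝[<](1:ℝ)) atTop := by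
  have hmem : Set.Ioo (1 - dl c) 1 ∈ 𝓝[<](1:ℝ) :=
    Ioo_mem_nhdsLT (by linarith [dl_pos hc])
  have hlog : Tendsto (fun x => Real.log (vv c (1-x))) (𝓝[<](1:ℝ)) atBot :=
    Real.tendsto_log_nhdsGT_zero.comp (tendsto_vv_comp hc)
  have h2 : Tendsto (fun x => Real.log (vv c (dl c)) - Real.log (vv c (1-x)))
      (𝓝[<](1:ℝ)) atTop := by
    apply Filter.tendsto_atTop_add_const_left
    exact tendsto_neg_atBot_atTop.comp hlog
  apply h2.congr'
  filter_upwards [hmem] with x hx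
  exact (integral_hh hc ⟨hx.1.le, hx.2⟩).symm

lemma unique (hc : 0 < c) (h2 : ℝ → ℝ)
    (hd : ∀ x ∈ Set.Ico (1 - dl c) 1,
      HasDerivWithinAt h2 ((h2 x)^2 + 2*c/(1-x)) (Set.Ico (1 - dl c) 1) x)
    (hb : ∀ x ∈ Set.Ico (1 - dl c) 1, 0 < h2 x ∧ h2 x < 1/(1-x))
    (hi : Tendsto (fun x => ∫ y in (1 - dl c)..x, h2 y) (𝓝[<](1:ℝ)) atTop) :
    Set.EqOn h2 (hh c) (Set.Ico (1 - dl c) 1) := by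
  set t0 := 1 - dl c with ht0def
  have hδ := dl_pos hc
  have ht0lt : t0 < 1 := by rw [ht0def]; linarith
  have hcont2 : ContinuousOn h2 (Set.Ico t0 1) := fun y hy => (hd y hy).continuousWithinAt
  have hmemIci : ∀ {y : ℝ}, y ∈ Set.Ico t0 1 → Set.Ico t0 1 ∈ 𝓝[Set.Ici y] y := by
    intro y hy
    exact mem_nhdsWithin.2 ⟨Set.Iio 1, isOpen_Iio, hy.2,
      fun z hz => ⟨le_trans hy.1 hz.2, hz.1⟩⟩
  have hmemIoi : ∀ {y : ℝ}, y ∈ Set.Ico t0 1 → Set.Ico t0 1 ∈ 𝓝[Set.Ioi y] y := by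
    intro y hy
    exact mem_nhdsWithin.2 ⟨Set.Iio 1, isOpen_Iio, hy.2,
      fun z hz => ⟨le_trans hy.1 hz.2.le, hz.1⟩⟩
  have hInt : ∀ x ∈ Set.Ico t0 1, IntervalIntegrable h2 MeasureTheory.volume t0 x := by
    intro x hx
    exact (hcont2.mono (fun y hy => ⟨hy.1, lt_of_le_of_lt hy.2 hx.2⟩)).intervalIntegrable_of_Icc hx.1
  set G : ℝ → ℝ := fun x => ∫ y in t0..x, h2 y with hGdef
  have hGd : ∀ y ∈ Set.Ico t0 1, HasDerivWithinAt G (h2 y) (Set.Ici y) y := by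
    intro y hy
    exact intervalIntegral.integral_hasDerivWithinAt_right (hInt y hy)
      ⟨Set.Ico t0 1, hmemIoi hy, (hcont2.aestronglyMeasurable measurableSet_Ico)⟩
      ((hcont2 y hy).mono_of_mem_nhdsWithin (hmemIoi hy))
  set P : ℝ → ℝ := fun x => h2 x * vv c (1-x) - ww c (1-x) with hPdef
  have hPd : ∀ y ∈ Set.Ico t0 1, HasDerivWithinAt P (h2 y * P y) (Set.Ici y) y := by
    intro y hy
    have htI := mem_window hc hy
    have ht2 := Ioc_sub_Ioo htI
    have hty : (0:ℝ) < 1 - y := htI.1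
    have hdy := (hd y hy).mono_of_mem_nhdsWithin (hmemIci hy)
    have hV := (hasDerivAt_comp_vv hc.le ht2).hasDerivWithinAt (s := Set.Ici y)
    have hW := (hasDerivAt_comp_ww hc.le ht2).hasDerivWithinAt (s := Set.Ici y)
    have H := (hdy.mul hV).sub hW
    have hzz : zz c (1-y) = -(2*c) * vv c (1-y) / (1-y) := by
      rw [eq_div_iff hty.ne', mul_comm (zz c (1-y))]
      exact t_mul_zz (c := c) (1-y)
    refine H.congr_deriv ?_; symm
    rw [hPdef, hzz]
    field_simp
    ring
  set Q : ℝ → ℝ := fun x => P x * Real.exp (-G x) with hQdef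
  have hQd : ∀ y ∈ Set.Ico t0 1, HasDerivWithinAt Q 0 (Set.Ici y) y := by
    intro y hy
    have hE : HasDerivWithinAt (fun x => Real.exp (-G x))
        (Real.exp (-G y) * -(h2 y)) (Set.Ici y) y :=
      (Real.hasDerivAt_exp (-G y)).comp_hasDerivWithinAt (h := fun x => -G x) y ((hGd y hy).neg)
    have H := (hPd y hy).mul hE
    refine H.congr_deriv ?_; symm
    ring
  have hQc : ∀ x ∈ Set.Ico t0 1, Q x = Q t0 := by
    intro x hx
    rcases eq_or_lt_of_le hx.1 with h | h
    · rw [← h]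
    · have hsub : Set.Icc t0 x ⊆ Set.Ico t0 1 := fun y hy => ⟨hy.1, lt_of_le_of_lt hy.2 hx.2⟩
      have hPc : ContinuousOn P (Set.Ico t0 1) := by
        apply ContinuousOn.sub
        · apply hcont2.mul
          intro y hy
          exact (hasDerivAt_comp_vv hc.le (Ioc_sub_Ioo (mem_window hc hy))).continuousAt.continuousWithinAt
        · intro y hy
          exact (hasDerivAt_comp_ww hc.le (Ioc_sub_Ioo (mem_window hc hy))).continuousAt.continuousWithinAt
      have hGc : ContinuousOn G (Set.Icc t0 x) := by
        have hio : MeasureTheory.IntegrableOn h2 (Set.uIcc t0 x) MeasureTheory.volume := by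
          rw [Set.uIcc_of_le hx.1]
          exact (hcont2.mono hsub).integrableOn_Icc
        have := intervalIntegral.continuousOn_primitive_interval hio
        rwa [Set.uIcc_of_le hx.1] at this
      have hQcont : ContinuousOn Q (Set.Icc t0 x) :=
        (hPc.mono hsub).mul (Real.continuous_exp.comp_continuousOn hGc.neg)
      have := constant_of_has_deriv_right_zero hQcont
        (fun y hy => hQd y ⟨hy.1, lt_of_lt_of_le hy.2 hx.2.le⟩)
      exact this x (Set.right_mem_Icc.2 hx.1)
  have hQt0 : Q t0 = P t0 := by
    rw [hQdef]
    simp [hGdef, intervalIntegral.integral_same]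
  have hPx : ∀ x ∈ Set.Ico t0 1, P x = P t0 * Real.exp (G x) := by
    intro x hx
    have h := hQc x hx
    rw [hQt0] at h
    rw [hQdef] at h
    simp only [Real.exp_neg] at h
    field_simp at h
    linarith [h]
  have hP0 : P t0 = 0 := by
    by_contra hne
    have htend : Tendsto (fun x => |P t0| * Real.exp (G x)) (𝓝[<](1:ℝ)) atTop :=
      (Real.tendsto_exp_atTop.comp hi).const_mul_atTop (abs_pos.2 hne)
    have hmem : Set.Ioo t0 1 ∈ 𝓝[<](1:ℝ) := Ioo_mem_nhdsLT ht0lt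
    have hbd : ∀ x ∈ Set.Ico t0 1, |P x| ≤ 3/2 := by
      intro x hx
      have htI := mem_window hc hx
      have hW := window hc htI
      have hB := hb x hx
      have hv := vv_pos hc htI
      have ht : (0:ℝ) < 1 - x := htI.1
      have hup : h2 x * vv c (1-x) < 3/2 := by
        have h1 : h2 x * vv c (1-x) < (1/(1-x)) * vv c (1-x) :=
          mul_lt_mul_of_pos_right hB.2 hv
        have h2' : (1/(1-x)) * vv c (1-x) ≤ (1/(1-x)) * (3*(1-x)/2) := by
          apply mul_le_mul_of_nonneg_left hW.2.2.2 (by positivity)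
        have h3 : (1/(1-x)) * (3*(1-x)/2) = 3/2 := by field_simp
        linarith
      have hlo : 0 < h2 x * vv c (1-x) := mul_pos hB.1 hv
      rw [abs_le]
      constructor <;> [skip; skip]
      · simp only [hPdef]; linarith [hW.2.1]
      · simp only [hPdef]; linarith [hW.1]
    have hev1 : ∀ᶠ x in 𝓝[<](1:ℝ), 2 < |P t0| * Real.exp (G x) :=
      htend.eventually_gt_atTop 2
    have hev2 : ∀ᶠ x in 𝓝[<](1:ℝ), x ∈ Set.Ioo t0 1 := hmem
    obtain ⟨x, hx1, hx2⟩ := (hev1.and hev2).exists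
    have hxI : x ∈ Set.Ico t0 1 := ⟨hx2.1.le, hx2.2⟩
    have : |P x| = |P t0| * Real.exp (G x) := by
      rw [hPx x hxI, abs_mul, Real.abs_exp]
    linarith [hbd x hxI, hx1, this.ge, this.le]
  intro x hx
  have hPzero : P x = 0 := by
    rw [hPx x hx, hP0, zero_mul]
  have hv := vv_pos hc (mem_window hc hx)
  rw [hh]
  rw [eq_div_iff hv.ne']
  rw [hPdef] at hPzero
  simp only at hPzero
  linarith

end L9
end

open Filter Topology

/-- For every `c > 0` there exists `δ > 0` such that there is exactly one
function `h` on `[1-δ, 1)` satisfying `h'(x) = h(x)² + 2c/(1-x)`, `0 < h(x) < 1/(1-x)`,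
and `lim_{x→1⁻} ∫_{1-δ}^x h(y) dy = ∞`. -/
theorem lemma9_unique_ode (c : ℝ) (hc : 0 < c) :
    ∃ δ > (0 : ℝ), ∃ h : ℝ → ℝ,
      ((∀ x ∈ Set.Ico (1 - δ) 1,
          HasDerivWithinAt h ((h x) ^ 2 + 2 * c / (1 - x)) (Set.Ico (1 - δ) 1) x) ∧
        (∀ x ∈ Set.Ico (1 - δ) 1, 0 < h x ∧ h x < 1 / (1 - x)) ∧
        Tendsto (fun x => ∫ y in (1 - δ)..x, h y) (𝓝[<] (1 : ℝ)) atTop) ∧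
      ∀ h' : ℝ → ℝ,
        ((∀ x ∈ Set.Ico (1 - δ) 1,
            HasDerivWithinAt h' ((h' x) ^ 2 + 2 * c / (1 - x)) (Set.Ico (1 - δ) 1) x) ∧
          (∀ x ∈ Set.Ico (1 - δ) 1, 0 < h' x ∧ h' x < 1 / (1 - x)) ∧
          Tendsto (fun x => ∫ y in (1 - δ)..x, h' y) (𝓝[<] (1 : ℝ)) atTop) →
        Set.EqOn h' h (Set.Ico (1 - δ) 1) := by
  refine ⟨L9.dl c, L9.dl_pos hc, L9.hh c, ⟨?_, ?_, ?_⟩, ?_⟩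
  · exact fun x hx => (L9.hasDerivAt_hh hc hx).hasDerivWithinAt
  · intro x hx
    have htI := L9.mem_window hc hx
    have hv := L9.vv_pos hc htI
    have hW := L9.window hc htI
    have ht : (0:ℝ) < 1 - x := htI.1
    constructor
    · exact div_pos (by linarith [hW.1]) hv
    · have hgg := L9.gg_pos hc htI
      simp only [L9.gg] at hgg
      rw [L9.hh, div_lt_div_iff₀ hv ht]
      linarith
  · exact L9.tendsto_int_hh hc
  · rintro h' ⟨hd, hb, hi⟩
    exact L9.unique hc h' hd hb hi
end

section
/- Let c > 0 and let m ≤ s be positive integers. If E_m, E_{m+1}, ..., E_s are independent random variables with E_i exponentially distributed with rate ic, then for every u > 0, P(Σ_{i=m}^{s} E_i < u) = e^{-cmu} Σ_{i=s+1}^{∞} C(i-1, i-m) (1 - e^{-cu})^{i-m}, where C(i-1, i-m) denotes the binomial coefficient. -/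
open MeasureTheory ProbabilityTheory Real Set
open scoped ENNReal NNReal

lemma comb_summable (m s : ℕ) (hm : 1 ≤ m) (hms : m ≤ s + 1) {p : ℝ}
    (hp0 : 0 ≤ p) (hp1 : p < 1) :
    Summable (fun j : ℕ => ((s + j).choose (m-1) : ℝ) * p ^ (s+1-m+j)) := by
  have h := summable_choose_mul_geometric_of_norm_lt_one (R := ℝ) (m - 1)
    (r := p) (by rw [Real.norm_eq_abs, abs_of_nonneg hp0]; exact hp1)
  have h2 := (summable_nat_add_iff (s + 1 - m)).2 h
  refine h2.congr fun j => ?_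
  have e1 : j + (s + 1 - m) + (m - 1) = s + j := by omega
  have e2 : j + (s + 1 - m) = s + 1 - m + j := by omega
  rw [e1, e2]

lemma comb_identity (m : ℕ) (hm : 1 ≤ m) {p : ℝ} (hp0 : 0 ≤ p) (hp1 : p < 1) :
    ∀ s, m - 1 ≤ s →
      ∑ j ∈ Finset.range m, (s.choose j : ℝ) * (1-p)^j * p^(s-j)
        = (1-p)^m * ∑' j : ℕ, ((s + j).choose (m-1) : ℝ) * p^(s+1-m+j) := by
  have hq0 : (0:ℝ) < 1 - p := by linarith
  intro s hs
  induction s, hs using Nat.le_induction with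
  | base =>
      obtain ⟨n, rfl⟩ : ∃ n, m = n + 1 := ⟨m - 1, by omega⟩
      simp only [Nat.add_sub_cancel]
      have hL : ∑ j ∈ Finset.range (n+1), (n.choose j : ℝ) * (1-p)^j * p^(n-j) = 1 := by
        calc ∑ j ∈ Finset.range (n+1), (n.choose j : ℝ) * (1-p)^j * p^(n-j)
            = ((1-p) + p)^n := by
              rw [add_pow]; exact Finset.sum_congr rfl fun j _ => by ring
          _ = 1 := by norm_num
      rw [hL]
      have ht := tsum_choose_mul_geometric_of_norm_lt_one (𝕜 := ℝ) n
        (r := p) (by rw [Real.norm_eq_abs, abs_of_nonneg hp0]; exact hp1)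
      have heq : ∑' j : ℕ, ((n + j).choose n : ℝ) * p^(n+1-(n+1)+j)
          = ∑' i : ℕ, ((i + n).choose n : ℝ) * p^i := by
        refine tsum_congr fun j => ?_
        rw [Nat.add_comm n j, show n+1-(n+1)+j = j by omega]
      rw [heq, ht]
      field_simp
  | succ s hs ih =>
      -- RHS step
      have hsum := comb_summable m s hm (by omega) hp0 hp1
      have hz := Summable.tsum_eq_zero_add hsum
      have hshift : ∑' j : ℕ, ((s + (j+1)).choose (m-1) : ℝ) * p^(s+1-m+(j+1))
          = ∑' j : ℕ, (((s+1) + j).choose (m-1) : ℝ) * p^((s+1)+1-m+j) := by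
        refine tsum_congr fun j => ?_
        rw [show s + (j+1) = s + 1 + j by omega, show s+1-m+(j+1) = s+1+1-m+j by omega]
      rw [hshift] at hz
      -- LHS step
      have hL : ∑ j ∈ Finset.range m, ((s+1).choose j : ℝ) * (1-p)^j * p^(s+1-j)
          = (∑ j ∈ Finset.range m, (s.choose j : ℝ) * (1-p)^j * p^(s-j))
            - (s.choose (m-1) : ℝ) * (1-p)^m * p^(s+1-m) := by
        have key : ∀ j ∈ Finset.range m,
            (s.choose j : ℝ) * (1-p)^j * p^(s-j) - ((s+1).choose j : ℝ) * (1-p)^j * p^(s+1-j)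
            = (fun i => if i = 0 then (0:ℝ) else (s.choose (i-1) : ℝ) * (1-p)^i * p^(s+1-i)) (j+1)
              - (fun i => if i = 0 then (0:ℝ) else (s.choose (i-1) : ℝ) * (1-p)^i * p^(s+1-i)) j := by
          intro j hj
          simp only [Finset.mem_range] at hj
          have hjs : j ≤ s := by omega
          cases j with
          | zero =>
              simp only [Nat.choose_zero_right, Nat.cast_one, pow_zero]
              rw [show s + 1 - 0 = (s - 0) + 1 by omega, show s - 0 = s by omega,
                show s + 1 - 1 = s by omega]
              norm_num
              ring
          | succ i =>
              simp only [if_neg (Nat.succ_ne_zero _), Nat.add_sub_cancel]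
              rw [Nat.choose_succ_succ s i, Nat.cast_add]
              rw [show s + 1 - (i+1+1) = s - (i+1) by omega,
                show s + 1 - (i+1) = s - i by omega]
              have h1 : p ^ (s - i) = p ^ (s - (i+1)) * p := by
                rw [← pow_succ]; congr 1; omega
              rw [h1]
              simp only [Nat.succ_eq_add_one]
              ring
        have tele := Finset.sum_range_sub
          (fun i => if i = 0 then (0:ℝ) else (s.choose (i-1) : ℝ) * (1-p)^i * p^(s+1-i)) m
        calc ∑ j ∈ Finset.range m, ((s+1).choose j : ℝ) * (1-p)^j * p^(s+1-j)
            = (∑ j ∈ Finset.range m, (s.choose j : ℝ) * (1-p)^j * p^(s-j))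
              - ∑ j ∈ Finset.range m, ((s.choose j : ℝ) * (1-p)^j * p^(s-j)
                  - ((s+1).choose j : ℝ) * (1-p)^j * p^(s+1-j)) := by
              rw [Finset.sum_sub_distrib]; ring
          _ = _ := by
              rw [Finset.sum_congr rfl key, tele, if_neg (by omega : m ≠ 0), if_pos rfl]
              ring
      simp only [add_zero] at hz
      have hz' : ∑' j : ℕ, (((s+1) + j).choose (m-1) : ℝ) * p^((s+1)+1-m+j)
          = (∑' j : ℕ, ((s + j).choose (m-1) : ℝ) * p^(s+1-m+j))
            - (s.choose (m-1) : ℝ) * p^(s+1-m) := by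
        rw [hz]; ring
      rw [hL, ih, hz']
      ring

/-- smooth part of the density of the sum of exponentials with rates `mc, ..., tc`. -/
noncomputable def smexp (c : ℝ) (m t : ℕ) (x : ℝ) : ℝ :=
  (m : ℝ) * (t.choose m) * c * Real.exp (-((m:ℝ)*c*x)) * (1 - Real.exp (-(c*x)))^(t-m)

/-- density of the sum of exponentials with rates `mc, ..., tc`. -/
noncomputable def fexp (c : ℝ) (m t : ℕ) (x : ℝ) : ℝ :=
  if 0 ≤ x then smexp c m t x else 0

lemma fexp_eq_indicator (c : ℝ) (m t : ℕ) :
    fexp c m t = (Set.Ici (0:ℝ)).indicator (smexp c m t) := by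
  funext x
  simp only [fexp, Set.indicator, Set.mem_Ici]

lemma continuous_smexp (c : ℝ) (m t : ℕ) : Continuous (smexp c m t) := by
  unfold smexp; fun_prop

lemma measurable_fexp (c : ℝ) (m t : ℕ) : Measurable (fexp c m t) := by
  rw [fexp_eq_indicator]
  exact ((continuous_smexp c m t).measurable).indicator measurableSet_Ici

lemma smexp_nonneg {c : ℝ} (hc : 0 < c) (m t : ℕ) {x : ℝ} (hx : 0 ≤ x) :
    0 ≤ smexp c m t x := by
  unfold smexp
  have h1 : Real.exp (-(c*x)) ≤ 1 := by
    rw [← Real.exp_zero]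
    exact Real.exp_le_exp.2 (by nlinarith)
  have h2 : (0:ℝ) ≤ 1 - Real.exp (-(c*x)) := by linarith
  positivity

lemma fexp_nonneg {c : ℝ} (hc : 0 < c) (m t : ℕ) (x : ℝ) : 0 ≤ fexp c m t x := by
  unfold fexp
  split_ifs with h
  · exact smexp_nonneg hc m t h
  · exact le_refl _

/-- FTC kernel -/
lemma ftc_kernel (c : ℝ) (hc : 0 < c) (k : ℕ) (z : ℝ) :
    ∫ y in (0:ℝ)..z, ((k:ℝ)+1)*c * Real.exp (c*(z-y)) * (Real.exp (c*(z-y)) - 1)^k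
      = (Real.exp (c*z) - 1)^(k+1) := by
  have hderiv : ∀ y ∈ Set.uIcc (0:ℝ) z,
      HasDerivAt (fun y => -(Real.exp (c*(z-y)) - 1)^(k+1))
        (((k:ℝ)+1)*c * Real.exp (c*(z-y)) * (Real.exp (c*(z-y)) - 1)^k) y := by
    intro y _
    have h1 : HasDerivAt (fun y : ℝ => c*(z-y)) (c * (-1)) y :=
      ((hasDerivAt_id y).const_sub z).const_mul c
    have h2 := h1.exp
    have h3 := ((h2.sub_const 1).pow (k+1)).neg
    refine h3.congr_deriv (Eq.symm ?_)
    push_cast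
    ring
  have hcont : Continuous fun y => ((k:ℝ)+1)*c * Real.exp (c*(z-y)) * (Real.exp (c*(z-y)) - 1)^k := by
    fun_prop
  rw [intervalIntegral.integral_eq_sub_of_hasDerivAt hderiv (hcont.intervalIntegrable _ _)]
  simp [Real.exp_zero]

/-- The convolution step. -/
lemma conv_step (c : ℝ) (hc : 0 < c) (m t : ℕ) (hm : 1 ≤ m) (hmt : m ≤ t) (z : ℝ) :
    ∫⁻ y, exponentialPDF (((t:ℝ)+1)*c) y * ENNReal.ofReal (fexp c m t (z - y))
      = ENNReal.ofReal (fexp c m (t+1) z) := by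
  set r : ℝ := ((t:ℝ)+1)*c with hr
  have hr0 : 0 < r := by positivity
  rcases lt_or_ge z 0 with hz | hz
  · -- z < 0 : both sides vanish
    have h0 : ∀ y : ℝ, exponentialPDF r y * ENNReal.ofReal (fexp c m t (z - y)) = 0 := by
      intro y
      rcases lt_or_ge y 0 with hy | hy
      · rw [exponentialPDF_of_neg hy, zero_mul]
      · rw [fexp, if_neg (by linarith : ¬ (0:ℝ) ≤ z - y), ENNReal.ofReal_zero, mul_zero]
    rw [lintegral_congr h0, lintegral_zero, fexp, if_neg (not_le.2 hz), ENNReal.ofReal_zero]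
  · -- main case
    set k := t - m with hk
    have htk : t = m + k := by omega
    have htkR : (t:ℝ) = (m:ℝ) + (k:ℝ) := by rw [htk]; push_cast; ring
    set ψ : ℝ → ℝ := fun y => r * Real.exp (-(r*y)) * smexp c m t (z-y) with hψ
    have hstep1 : ∀ y : ℝ, exponentialPDF r y * ENNReal.ofReal (fexp c m t (z - y))
        = ENNReal.ofReal ((Set.Icc 0 z).indicator ψ y) := by
      intro y
      rcases lt_or_ge y 0 with hy | hy
      · rw [exponentialPDF_of_neg hy, zero_mul,
          Set.indicator_of_notMem (by simp [Set.mem_Icc]; intro h; linarith),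
          ENNReal.ofReal_zero]
      · rw [exponentialPDF_of_nonneg hy]
        rcases le_or_gt y z with hyz | hyz
        · rw [fexp, if_pos (by linarith : (0:ℝ) ≤ z - y),
            ← ENNReal.ofReal_mul (by positivity : (0:ℝ) ≤ r * Real.exp (-(r*y))),
            Set.indicator_of_mem (Set.mem_Icc.2 ⟨hy, hyz⟩)]
        · rw [fexp, if_neg (by linarith : ¬ (0:ℝ) ≤ z - y), ENNReal.ofReal_zero, mul_zero,
            Set.indicator_of_notMem (by simp [Set.mem_Icc]; intro h; linarith),
            ENNReal.ofReal_zero]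
    rw [lintegral_congr hstep1]
    have hψcont : Continuous ψ := by
      have := continuous_smexp c m t
      fun_prop
    have hint : Integrable ((Set.Icc (0:ℝ) z).indicator ψ) := by
      rw [integrable_indicator_iff measurableSet_Icc]
      exact hψcont.integrableOn_Icc
    have hnn : 0 ≤ᵐ[volume] ((Set.Icc (0:ℝ) z).indicator ψ) := by
      refine Filter.Eventually.of_forall ?_
      refine fun y => Set.indicator_nonneg (fun y hy => ?_) y
      rcases Set.mem_Icc.1 hy with ⟨h1, h2⟩
      have := smexp_nonneg hc m t (by linarith : (0:ℝ) ≤ z - y)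
      positivity
    rw [← MeasureTheory.ofReal_integral_eq_lintegral_ofReal hint hnn]
    congr 1
    rw [MeasureTheory.integral_indicator measurableSet_Icc,
      MeasureTheory.integral_Icc_eq_integral_Ioc, ← intervalIntegral.integral_of_le hz]
    -- now evaluate the interval integral
    set C0 : ℝ := (m:ℝ) * (t.choose m) * c * ((t:ℝ)+1) * Real.exp (-(((t:ℝ)+1)*c*z)) / ((k:ℝ)+1)
      with hC0
    have hkey : ∀ y : ℝ, ψ y
        = C0 * (((k:ℝ)+1)*c * Real.exp (c*(z-y)) * (Real.exp (c*(z-y)) - 1)^k) := by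
      intro y
      have e1 : (1 - Real.exp (-(c*(z-y))))^k
          = Real.exp ((k:ℝ) * (-(c*(z-y)))) * (Real.exp (c*(z-y)) - 1)^k := by
        rw [Real.exp_nat_mul, ← mul_pow]
        congr 1
        have hh : Real.exp (-(c*(z-y))) * Real.exp (c*(z-y)) = 1 := by
          rw [← Real.exp_add]; simp
        linear_combination -hh
      have e2 : Real.exp (-(r*y)) * Real.exp (-((m:ℝ)*c*(z-y)))
            * Real.exp ((k:ℝ) * (-(c*(z-y))))
          = Real.exp (-(((t:ℝ)+1)*c*z)) * Real.exp (c*(z-y)) := by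
        rw [← Real.exp_add, ← Real.exp_add, ← Real.exp_add]
        congr 1
        rw [hr, htkR]; ring
      have hk1 : ((k:ℝ)+1) ≠ 0 := by positivity
      rw [hψ]
      show r * Real.exp (-(r*y)) * smexp c m t (z-y) = _
      rw [smexp, ← hk, e1, hC0, div_mul_eq_mul_div, eq_div_iff hk1]
      linear_combination (r * ((m:ℝ) * (t.choose m) * c) * ((k:ℝ)+1)
        * (Real.exp (c*(z-y)) - 1)^k) * e2
    rw [intervalIntegral.integral_congr (fun y _ => hkey y),
      intervalIntegral.integral_const_mul, ftc_kernel c hc k z]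
    -- final algebra
    rw [fexp, if_pos hz, smexp, show t + 1 - m = k + 1 by omega]
    have e3 : (1 - Real.exp (-(c*z)))^(k+1)
        = Real.exp (((k:ℝ)+1) * (-(c*z))) * (Real.exp (c*z) - 1)^(k+1) := by
      rw [show ((k:ℝ)+1) = ((k+1 : ℕ) : ℝ) by push_cast; ring, Real.exp_nat_mul, ← mul_pow]
      congr 1
      have hh : Real.exp (-(c*z)) * Real.exp (c*z) = 1 := by
        rw [← Real.exp_add]; simp
      linear_combination -hh
    have hchoose : ((k:ℝ)+1) * ((t+1).choose m : ℝ) = ((t:ℝ)+1) * (t.choose m : ℝ) := by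
      have h1 : (t+1) * t.choose k = (t+1).choose (k+1) * (k+1) := Nat.add_one_mul_choose_eq t k
      have h2 : t.choose k = t.choose m := by
        rw [show m = t - k by omega]
        exact (Nat.choose_symm (by omega)).symm
      have h3 : (t+1).choose (k+1) = (t+1).choose m := by
        rw [show m = (t+1) - (k+1) by omega]
        exact (Nat.choose_symm (by omega)).symm
      rw [h2, h3] at h1
      exact_mod_cast by linarith [congrArg (Nat.cast (R := ℝ)) h1]
    have e4 : Real.exp (-(((t:ℝ)+1)*c*z))
        = Real.exp (-((m:ℝ)*c*z)) * Real.exp (((k:ℝ)+1) * (-(c*z))) := by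
      rw [← Real.exp_add]
      congr 1
      rw [htkR]; ring
    rw [e3, hC0, e4]
    have hk1 : ((k:ℝ)+1) ≠ 0 := by positivity
    rw [div_mul_eq_mul_div, div_eq_iff hk1]
    linear_combination (-((m:ℝ) * c * Real.exp (-((m:ℝ)*c*z)) * Real.exp (((k:ℝ)+1) * (-(c*z)))
      * (Real.exp (c*z) - 1)^(k+1))) * hchoose

lemma fexp_def (c : ℝ) (m t : ℕ) (x : ℝ) :
    fexp c m t x = if 0 ≤ x then smexp c m t x else 0 := rfl

lemma smexp_def (c : ℝ) (m t : ℕ) (x : ℝ) : smexp c m t x =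
    (m : ℝ) * (t.choose m) * c * Real.exp (-((m:ℝ)*c*x)) * (1 - Real.exp (-(c*x)))^(t-m) := rfl

lemma integral_smexp (c : ℝ) (hc : 0 < c) (m s : ℕ) (hm : 1 ≤ m) (hms : m ≤ s) (u : ℝ) :
    ∫ x in (0:ℝ)..u, smexp c m s x
      = ∑ j ∈ Finset.range m,
          (s.choose j : ℝ) * (Real.exp (-(c*u))^j * (1 - Real.exp (-(c*u)))^(s-j)) := by
  set F : ℝ → ℝ := fun x => ∑ j ∈ Finset.range m,
    (s.choose j : ℝ) * (Real.exp (-(c*x))^j * (1 - Real.exp (-(c*x)))^(s-j)) with hF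
  have hder : ∀ x : ℝ, HasDerivAt F (smexp c m s x) x := by
    intro x
    have h0 : HasDerivAt (fun x : ℝ => -(c*x)) (-c) x := by
      simpa using ((hasDerivAt_id x).const_mul c).fun_neg
    have hE : HasDerivAt (fun x : ℝ => Real.exp (-(c*x))) (Real.exp (-(c*x)) * -c) x := h0.exp
    set aL : ℕ → ℝ := fun i =>
      c * (i:ℝ) * (s.choose i : ℝ) * Real.exp (-(c*x))^i * (1 - Real.exp (-(c*x)))^(s-i)
      with haL
    have hterm : ∀ j ∈ Finset.range m,
        HasDerivAt (fun x => (s.choose j : ℝ) *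
            (Real.exp (-(c*x))^j * (1 - Real.exp (-(c*x)))^(s-j)))
          (aL (j+1) - aL j) x := by
      intro j hj
      simp only [Finset.mem_range] at hj
      have hjs : j < s := by omega
      have h1 := (hE.pow j).mul ((hE.const_sub 1).pow (s-j))
      have h2 := h1.const_mul (s.choose j : ℝ)
      refine h2.congr_deriv (Eq.symm ?_)
      simp only [Pi.pow_apply]
      set E := Real.exp (-(c*x)) with hEdef
      have e1 : (j:ℝ) * E^(j-1) * E = (j:ℝ) * E^j := by
        cases j with
        | zero => simp
        | succ i => rw [Nat.add_sub_cancel, pow_succ]; ring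
      have e2 : (1-E)^(s-j) = (1-E)^(s-j-1) * (1-E) := by
        rw [← pow_succ]; congr 1; omega
      have e3 : ((s-j:ℕ):ℝ) = (s:ℝ) - (j:ℝ) := by
        rw [Nat.cast_sub (by omega)]
      have e4 : ((j:ℝ)+1) * ((s.choose (j+1)):ℝ) = ((s.choose j):ℝ) * ((s:ℝ) - (j:ℝ)) := by
        have := Nat.choose_succ_right_eq s j
        have hcast := congrArg (Nat.cast (R := ℝ)) this
        push_cast at hcast
        rw [← e3]
        push_cast
        linarith [hcast]
      rw [haL]
      simp only
      rw [show s - (j+1) = s - j - 1 by omega, e2, e3]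
      push_cast
      linear_combination (c * (1-E)^(s-j-1) * E^(j+1)) * e4
        + (c * ((s.choose j):ℝ) * (1-E)^(s-j-1) * (1-E)) * e1
    have hsum := HasDerivAt.fun_sum hterm
    rw [Finset.sum_range_sub aL m] at hsum
    refine hsum.congr_deriv (Eq.symm ?_)
    have h00 : aL 0 = 0 := by rw [haL]; simp
    rw [h00, sub_zero, haL]
    simp only
    rw [smexp, show -((m:ℝ)*c*x) = (m:ℝ) * (-(c*x)) by ring, Real.exp_nat_mul]
    ring
  rw [intervalIntegral.integral_eq_sub_of_hasDerivAt (fun x _ => hder x)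
    ((continuous_smexp c m s).intervalIntegrable 0 u)]
  have hF0 : F 0 = 0 := by
    rw [hF]
    simp only
    refine Finset.sum_eq_zero fun j hj => ?_
    simp only [Finset.mem_range] at hj
    simp [zero_pow (show s - j ≠ 0 by omega)]
  rw [hF0, sub_zero]

lemma lint_translate (g : ℝ → ℝ≥0∞) (a u : ℝ) :
    ∫⁻ x in Set.Iio (u - a), g x = ∫⁻ x in Set.Iio u, g (x - a) := by
  have hmp : MeasurePreserving (fun x : ℝ => x - a) volume volume :=
    measurePreserving_sub_right volume a
  have hemb : MeasurableEmbedding (fun x : ℝ => x - a) :=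
    (MeasurableEquiv.subRight a).measurableEmbedding
  have hpre : (fun x : ℝ => x - a) ⁻¹' (Set.Iio (u - a)) = Set.Iio u := by
    ext x; simp [sub_lt_sub_iff_right]
  rw [← hmp.setLIntegral_comp_preimage_emb hemb g (Set.Iio (u - a)), hpre]

lemma measurable_gammaPDF' (a r : ℝ) : Measurable (gammaPDF a r) := by
  unfold gammaPDF
  exact (measurable_gammaPDFReal a r).ennreal_ofReal

lemma cdf_aux (c : ℝ) (hc : 0 < c) (m s : ℕ) (hm : 1 ≤ m)
    {Ω : Type*} [MeasurableSpace Ω] (P : Measure Ω) [IsProbabilityMeasure P]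
    (E : ℕ → Ω → ℝ) (hmeas : ∀ i, Measurable (E i))
    (hdist' : ∀ i, m ≤ i → i ≤ s → Measure.map (E i) P = expMeasure ((i : ℝ) * c))
    (hI : ∀ t, m ≤ t → t < s →
      IndepFun (fun ω => ∑ i ∈ Finset.Icc m t, E i ω) (E (t+1)) P) :
    ∀ n, m + n ≤ s → ∀ u : ℝ,
      P {ω | (∑ i ∈ Finset.Icc m (m+n), E i ω) < u}
        = ∫⁻ x in Set.Iio u, ENNReal.ofReal (fexp c m (m+n) x) := by
  intro n
  induction n with
  | zero =>
      intro hn u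
      simp only [Nat.add_zero, Finset.Icc_self, Finset.sum_singleton]
      have h1 : P {ω | E m ω < u} = Measure.map (E m) P (Set.Iio u) := by
        rw [Measure.map_apply (hmeas m) measurableSet_Iio]; rfl
      rw [h1, hdist' m le_rfl (by omega), expMeasure, gammaMeasure,
        withDensity_apply _ measurableSet_Iio]
      refine lintegral_congr fun x => ?_
      rw [show gammaPDF 1 ((m:ℝ)*c) x = exponentialPDF ((m:ℝ)*c) x from rfl,
        exponentialPDF_eq, fexp_def]
      congr 1
      split_ifs with hx
      · rw [smexp_def, Nat.choose_self, Nat.sub_self, pow_zero]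
        push_cast; ring
      · rfl
  | succ n ih =>
      intro hn u
      have ihc := ih (by omega)
      set t := m + n with hT
      have ht1 : m ≤ t := Nat.le_add_right _ _
      have hts : t < s := by omega
      set X := fun ω => ∑ i ∈ Finset.Icc m t, E i ω with hX
      have hXm : Measurable X := Finset.measurable_sum _ fun i _ => hmeas i
      have hYm : Measurable (E (t+1)) := hmeas _
      have hXY := hI t ht1 hts
      have hmapXY : Measure.map (fun ω => (X ω, E (t+1) ω)) P
          = (Measure.map X P).prod (Measure.map (E (t+1)) P) :=
        (indepFun_iff_map_prod_eq_prod_map_map hXm.aemeasurable hYm.aemeasurable).1 hXY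
      have hA : MeasurableSet {p : ℝ×ℝ | p.1 + p.2 < u} :=
        measurableSet_lt (measurable_fst.add measurable_snd) measurable_const
      have hset : {ω | (∑ i ∈ Finset.Icc m (m+(n+1)), E i ω) < u}
          = (fun ω => (X ω, E (t+1) ω)) ⁻¹' {p : ℝ×ℝ | p.1 + p.2 < u} := by
        ext ω
        simp only [Set.mem_setOf_eq, Set.mem_preimage]
        rw [show m + (n+1) = t + 1 by omega, Finset.sum_Icc_succ_top (by omega : m ≤ t+1)]
      rw [hset, ← Measure.map_apply (hXm.prodMk hYm) hA, hmapXY]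
      haveI : IsProbabilityMeasure (Measure.map (E (t+1)) P) :=
        Measure.isProbabilityMeasure_map hYm.aemeasurable
      haveI : IsProbabilityMeasure (Measure.map X P) :=
        Measure.isProbabilityMeasure_map hXm.aemeasurable
      rw [Measure.prod_apply_symm hA]
      have hpre : ∀ y : ℝ, ((fun x => (x, y)) ⁻¹' {p : ℝ×ℝ | p.1+p.2<u}) = Set.Iio (u - y) := by
        intro y; ext x; simp [Set.mem_setOf_eq, lt_sub_iff_add_lt]
      have hIH : ∀ y : ℝ, Measure.map X P (Set.Iio (u - y))
          = ∫⁻ x in Set.Iio u, ENNReal.ofReal (fexp c m t (x - y)) := by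
        intro y
        rw [Measure.map_apply hXm measurableSet_Iio,
          show X ⁻¹' Set.Iio (u-y) = {ω | (∑ i ∈ Finset.Icc m (m+n), E i ω) < u - y} from rfl,
          ihc (u - y), lint_translate]
      have hswap : ∫⁻ y, (∫⁻ x in Set.Iio u, ENNReal.ofReal (fexp c m t (x - y)))
            ∂(Measure.map (E (t+1)) P)
          = ∫⁻ x in Set.Iio u, ∫⁻ y, ENNReal.ofReal (fexp c m t (x - y))
            ∂(Measure.map (E (t+1)) P) := by
        have hunc : AEMeasurable
            (Function.uncurry fun (y x : ℝ) => ENNReal.ofReal (fexp c m t (x - y)))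
            ((Measure.map (E (t+1)) P).prod (volume.restrict (Set.Iio u))) := by
          exact (((measurable_fexp c m t).comp
            (measurable_snd.sub measurable_fst)).ennreal_ofReal).aemeasurable
        exact lintegral_lintegral_swap (f := fun (y x : ℝ) =>
          ENNReal.ofReal (fexp c m t (x - y))) hunc
      have hfin : ∀ x : ℝ, ∫⁻ y, ENNReal.ofReal (fexp c m t (x - y))
            ∂(Measure.map (E (t+1)) P) = ENNReal.ofReal (fexp c m (t+1) x) := by
        intro x
        have hcast : expMeasure ((↑(t+1) : ℝ) * c) = expMeasure (((t:ℝ)+1)*c) := by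
          norm_num
        have hgm : Measurable fun y : ℝ => ENNReal.ofReal (fexp c m t (x - y)) :=
          Measurable.ennreal_ofReal ((measurable_fexp c m t).comp
            (measurable_const.sub measurable_id))
        rw [hdist' (t+1) (by omega) (by omega), hcast, expMeasure, gammaMeasure,
          lintegral_withDensity_eq_lintegral_mul _ (measurable_gammaPDF' _ _) hgm]
        rw [← conv_step c hc m t hm ht1 x]
        exact lintegral_congr fun y => rfl
      simp_rw [hpre, hIH]
      rw [hswap, show m+(n+1) = t+1 by omega]
      exact lintegral_congr fun x => hfin x

/-- If `E_m, ..., E_s` are independent exponential random variables,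
`E_i` with rate `ic`, then for every `u > 0`,
`P(Σ_{i=m}^s E_i < u) = e^{-cmu} Σ_{i=s+1}^∞ C(i-1, i-m) (1 - e^{-cu})^{i-m}`
(the sum on the right being reindexed by `i = s + 1 + j`, `j ∈ ℕ`). -/
theorem exp_sum_cdf (c : ℝ) (hc : 0 < c) (m s : ℕ) (hm : 1 ≤ m) (hms : m ≤ s)
    {Ω : Type*} [MeasurableSpace Ω] (P : Measure Ω) [IsProbabilityMeasure P]
    (E : ℕ → Ω → ℝ) (hmeas : ∀ i, Measurable (E i))
    (hindep : iIndepFun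
      (fun i : {i : ℕ // i ∈ Finset.Icc m s} => E i) P)
    (hdist : ∀ i ∈ Finset.Icc m s, Measure.map (E i) P = expMeasure ((i : ℝ) * c))
    (u : ℝ) (hu : 0 < u) :
    (P {ω | (∑ i ∈ Finset.Icc m s, E i ω) < u}).toReal =
      Real.exp (-(c * m * u)) *
        ∑' j : ℕ, ((s + j).choose (s + 1 + j - m) : ℝ) *
          (1 - Real.exp (-(c * u))) ^ (s + 1 + j - m) := by
  classical
  have hdist' : ∀ i, m ≤ i → i ≤ s → Measure.map (E i) P = expMeasure ((i : ℝ) * c) :=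
    fun i h1 h2 => hdist i (Finset.mem_Icc.2 ⟨h1, h2⟩)
  have hI : ∀ t, m ≤ t → t < s →
      IndepFun (fun ω => ∑ i ∈ Finset.Icc m t, E i ω) (E (t+1)) P := by
    intro t hmt hts
    set S : Finset {i : ℕ // i ∈ Finset.Icc m s} :=
      Finset.univ.filter (fun i => (i:ℕ) ≤ t) with hS
    have hmemT : (t+1) ∈ Finset.Icc m s := Finset.mem_Icc.2 ⟨by omega, by omega⟩
    set T : Finset {i : ℕ // i ∈ Finset.Icc m s} := {⟨t+1, hmemT⟩} with hT
    have hdisj : Disjoint S T := by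
      rw [Finset.disjoint_right]
      intro a haT haS
      rw [hT, Finset.mem_singleton] at haT
      rw [hS, Finset.mem_filter] at haS
      rw [haT] at haS
      simp only at haS
      omega
    have h1 := hindep.indepFun_finset S T hdisj (fun i => hmeas i)
    have h2 := h1.comp (φ := fun x : {i // i ∈ S} → ℝ => ∑ i, x i)
      (ψ := fun x : {i // i ∈ T} → ℝ =>
        x ⟨⟨t+1, hmemT⟩, by rw [hT]; exact Finset.mem_singleton_self _⟩)
      (Finset.measurable_sum _ (fun i _ => measurable_pi_apply i))
      (measurable_pi_apply (X := fun _ : {i // i ∈ T} => ℝ) _)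
    have e1 : (fun ω => ∑ i ∈ Finset.Icc m t, E i ω)
        = (fun x : {i // i ∈ S} → ℝ => ∑ i, x i)
          ∘ (fun a (i : {i // i ∈ S}) => E ((i : {i : ℕ // i ∈ Finset.Icc m s}) : ℕ) a) := by
      funext a
      simp only [Function.comp]
      rw [Finset.sum_coe_sort S (fun i => E (i : ℕ) a), hS, Finset.sum_filter,
        Finset.univ_eq_attach,
        Finset.sum_attach (Finset.Icc m s) (fun i => if i ≤ t then E i a else 0),
        ← Finset.sum_filter]
      congr 1
      ext i
      simp only [Finset.mem_filter, Finset.mem_Icc]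
      omega
    rw [e1]
    exact h2
  have hP := cdf_aux c hc m s hm P E hmeas hdist' hI (s - m) (by omega) u
  rw [show m + (s - m) = s by omega] at hP
  have hq0 : 0 < Real.exp (-(c*u)) := Real.exp_pos _
  have hq1 : Real.exp (-(c*u)) < 1 := by
    rw [← Real.exp_zero]
    exact Real.exp_lt_exp.2 (by nlinarith)
  -- evaluate the lintegral
  have hint : Integrable (fexp c m s) (volume.restrict (Set.Iio u)) := by
    rw [fexp_eq_indicator, integrable_indicator_iff measurableSet_Ici]
    rw [MeasureTheory.IntegrableOn, Measure.restrict_restrict measurableSet_Ici]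
    exact ((continuous_smexp c m s).integrableOn_Icc (a := 0) (b := u)).mono_set
      (fun x hx => ⟨hx.1, le_of_lt hx.2⟩)
  have hnn : 0 ≤ᵐ[volume.restrict (Set.Iio u)] fexp c m s :=
    Filter.Eventually.of_forall (fexp_nonneg hc m s)
  have hIL : ∫⁻ x in Set.Iio u, ENNReal.ofReal (fexp c m s x)
      = ENNReal.ofReal (∑ j ∈ Finset.range m,
          (s.choose j : ℝ) * (Real.exp (-(c*u))^j * (1 - Real.exp (-(c*u)))^(s-j))) := by
    rw [← MeasureTheory.ofReal_integral_eq_lintegral_ofReal hint hnn]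
    congr 1
    rw [fexp_eq_indicator, MeasureTheory.setIntegral_indicator measurableSet_Ici,
      Set.Iio_inter_Ici, MeasureTheory.integral_Ico_eq_integral_Ioo, ← MeasureTheory.integral_Ioc_eq_integral_Ioo,
      ← intervalIntegral.integral_of_le hu.le, integral_smexp c hc m s hm hms u]
  have hAnn : 0 ≤ ∑ j ∈ Finset.range m,
      (s.choose j : ℝ) * (Real.exp (-(c*u))^j * (1 - Real.exp (-(c*u)))^(s-j)) := by
    refine Finset.sum_nonneg fun j _ => ?_
    have : (0:ℝ) ≤ 1 - Real.exp (-(c*u)) := by linarith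
    positivity
  rw [hP, hIL, ENNReal.toReal_ofReal hAnn]
  -- combinatorial identity
  have hp0 : (0:ℝ) ≤ 1 - Real.exp (-(c*u)) := by linarith
  have hp1 : (1:ℝ) - Real.exp (-(c*u)) < 1 := by linarith
  have hcomb := comb_identity m hm hp0 hp1 s (by omega)
  have hL : ∑ j ∈ Finset.range m,
      (s.choose j : ℝ) * (Real.exp (-(c*u))^j * (1 - Real.exp (-(c*u)))^(s-j))
      = ∑ j ∈ Finset.range m, (s.choose j : ℝ) * (1-(1 - Real.exp (-(c*u))))^j
          * (1 - Real.exp (-(c*u)))^(s-j) := by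
    refine Finset.sum_congr rfl fun j _ => ?_
    rw [show (1:ℝ) - (1 - Real.exp (-(c*u))) = Real.exp (-(c*u)) by ring]
    ring
  have hA : Real.exp (-(c * (m:ℝ) * u)) = (1-(1 - Real.exp (-(c*u))))^m := by
    rw [show (1:ℝ) - (1 - Real.exp (-(c*u))) = Real.exp (-(c*u)) by ring,
      ← Real.exp_nat_mul]
    congr 1
    ring
  have hB : ∑' j : ℕ, ((s + j).choose (s + 1 + j - m) : ℝ)
        * (1 - Real.exp (-(c*u))) ^ (s + 1 + j - m)
      = ∑' j : ℕ, ((s + j).choose (m-1) : ℝ)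
        * (1 - Real.exp (-(c*u))) ^ (s + 1 - m + j) := by
    refine tsum_congr fun j => ?_
    rw [show s + 1 + j - m = (s + j) - (m-1) by omega,
      Nat.choose_symm (by omega : m - 1 ≤ s + j),
      show (s + j) - (m-1) = s + 1 - m + j by omega]
  rw [hL, hA, hB]
  exact hcomb
end
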